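/- Let (V, I) be an interval system. If a nonempty interval A ∈ I admits a greatest proper decomposition {B_j | j ∈ J} with |J| ≥ 3, then A is a strong set of (V, I). -/
import Mathlib


variable {V : Type*}

/-- `Q` is a closure system on `V`: it contains `V` and is closed under
intersections of nonempty subfamilies. -/
def IsClosureSystem (Q : Set (Set V)) : Prop :=
  Set.univ ∈ Q ∧ ∀ F ⊆ Q, F.Nonempty → ⋂₀ F ∈ Q

/-- Algebraic: the union of any nonempty chain of closed sets is closed. -/
def IsAlgebraicSystem (Q : Set (Set V)) : Prop :=
  ∀ C ⊆ Q, C.Nonempty → IsChain (· ⊆ ·) C → ⋃₀ C ∈ Q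

/-- Condition (I₀): the empty set and all singletons are closed. -/
def CondI0 (Q : Set (Set V)) : Prop := ∅ ∈ Q ∧ ∀ x : V, {x} ∈ Q

/-- Condition (I₁): the union of two intersecting members is a member. -/
def CondI1 (Q : Set (Set V)) : Prop :=
  ∀ A ∈ Q, ∀ B ∈ Q, (A ∩ B).Nonempty → A ∪ B ∈ Q

/-- Condition (I₂): differences of properly overlapping members are members. -/
def CondI2 (Q : Set (Set V)) : Prop :=
  ∀ A ∈ Q, ∀ B ∈ Q, (A ∩ B).Nonempty → ¬ A ⊆ B → ¬ B ⊆ A → A \ B ∈ Q ∧ B \ A ∈ Q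

/-- An interval system: an algebraic closure system satisfying (I₀), (I₁), (I₂). -/
def IsIntervalSystem (Q : Set (Set V)) : Prop :=
  IsClosureSystem Q ∧ IsAlgebraicSystem Q ∧ CondI0 Q ∧ CondI1 Q ∧ CondI2 Q

/-- `A` is a strong set of the closure system `Q`. -/
def IsStrong (Q : Set (Set V)) (A : Set V) : Prop :=
  A ∈ Q ∧ ∀ B ∈ Q, (A ∩ B).Nonempty → A ⊆ B ∨ B ⊆ A

/-- A decomposition: a partition of `V` (coded as a setoid) all of whose
blocks belong to `Q`.  The refinement order on partitions corresponds to the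
order on `Setoid V` (finer below). -/
def IsDecomp (Q : Set (Set V)) (π : Setoid V) : Prop :=
  ∀ x : V, {y | π.r x y} ∈ Q

/-- The lattice `D(V,Q)` of decompositions, as a subtype of `Setoid V`
with the induced (refinement) partial order. -/
abbrev Decomp (Q : Set (Set V)) := {π : Setoid V // IsDecomp Q π}

/-- `π_A`: the partition with block `A` and all other blocks singletons. -/
def piA (A : Set V) : Setoid V :=
  ⟨fun a b => a = b ∨ (a ∈ A ∧ b ∈ A), by
    constructor
    · intro a; exact Or.inl rfl
    · intro a b h; aesop
    · intro a b c h1 h2; aesop⟩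

/-- A decomposition of `A` in the restricted closure system `(A, Q_A)`,
`Q_A = {C ∩ A | C ∈ Q}`: a partition of `A` all of whose blocks are of the
form `C ∩ A` with `C ∈ Q`. -/
def IsRestDecomp (Q : Set (Set V)) (A : Set V) (μ : Setoid ↥A) : Prop :=
  ∀ x : ↥A, ∃ C ∈ Q, Subtype.val '' {y | μ.r x y} = C ∩ A

/-- `μ` is a greatest proper decomposition of `A` in `(A, Q_A)`: it is proper
(different from `{A}`, i.e. `μ ≠ ⊤`) and every proper decomposition of `A`
refines it. -/
def IsGreatestProperDecomp (Q : Set (Set V)) (A : Set V) (μ : Setoid ↥A) : Prop :=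
  IsRestDecomp Q A μ ∧ μ ≠ ⊤ ∧
    ∀ ν : Setoid ↥A, IsRestDecomp Q A ν → ν ≠ ⊤ → ν ≤ μ

/-- `π` is completely join-irreducible in the lattice `D(V,Q)`: it is not the
least decomposition `Δ` and whenever it is the join (least upper bound within
`D(V,Q)`) of a family of decompositions, it is one of them. -/
def IsCJI (Q : Set (Set V)) (π : Decomp Q) : Prop :=
  π.1 ≠ ⊥ ∧ ∀ S : Set (Decomp Q), IsLUB S π → π ∈ S

/-- In an interval system, if a nonempty interval `A` admits a greatest
proper decomposition with at least three blocks, then `A` is a strong set. -/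
theorem stmt10 (I : Set (Set V)) (hI : IsIntervalSystem I)
    (A : Set V) (hA : A ∈ I) (hne : A.Nonempty)
    (μ : Setoid ↥A) (hμ : IsGreatestProperDecomp I A μ)
    (h3 : ∃ B₁ ∈ μ.classes, ∃ B₂ ∈ μ.classes, ∃ B₃ ∈ μ.classes,
      B₁ ≠ B₂ ∧ B₁ ≠ B₃ ∧ B₂ ≠ B₃) :
    IsStrong I A := by
  obtain ⟨hclos, halg, hI0, hI1, hI2⟩ := hI
  refine ⟨hA, ?_⟩
  intro B hB hmeet
  by_contra hcon
  push_neg at hcon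
  obtain ⟨hAB, hBA⟩ := hcon
  have hdiff : A \ B ∈ I := (hI2 A hA B hB hmeet hAB hBA).1
  obtain ⟨x₀, hx₀⟩ := hmeet
  obtain ⟨y₀, hy₀A, hy₀B⟩ := Set.not_subset.mp hAB
  let ν : Setoid ↥A := ⟨fun a b => ((a : V) ∈ B ↔ (b : V) ∈ B),
    ⟨fun _ => Iff.rfl, Iff.symm, Iff.trans⟩⟩
  have hνdec : IsRestDecomp I A ν := by
    intro x
    by_cases hx : (x : V) ∈ B
    · refine ⟨B, hB, ?_⟩
      ext v
      simp only [Set.mem_image, Set.mem_setOf_eq, Set.mem_inter_iff]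
      constructor
      · rintro ⟨y, hy, rfl⟩
        exact ⟨hy.mp hx, y.2⟩
      · rintro ⟨hvB, hvA⟩
        exact ⟨⟨v, hvA⟩, iff_of_true hx hvB, rfl⟩
    · refine ⟨A \ B, hdiff, ?_⟩
      ext v
      simp only [Set.mem_image, Set.mem_setOf_eq, Set.mem_inter_iff, Set.mem_diff]
      constructor
      · rintro ⟨y, hy, rfl⟩
        exact ⟨⟨y.2, fun hyB => hx (hy.mpr hyB)⟩, y.2⟩
      · rintro ⟨⟨hvA, hvB⟩, -⟩
        exact ⟨⟨v, hvA⟩, iff_of_false hx hvB, rfl⟩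
  set xA : ↥A := ⟨x₀, hx₀.1⟩ with hxA
  set yA : ↥A := ⟨y₀, hy₀A⟩ with hyA
  have hνne : ν ≠ ⊤ := by
    intro h
    have : ν xA yA := by rw [h]; trivial
    exact hy₀B (this.mp hx₀.2)
  have hle : ν ≤ μ := hμ.2.2 ν hνdec hνne
  have key : ∀ b : ↥A, μ xA b ∨ μ yA b := by
    intro b
    by_cases hb : (b : V) ∈ B
    · exact Or.inl (Setoid.le_def.mp hle (iff_of_true hx₀.2 hb))
    · exact Or.inr (Setoid.le_def.mp hle (iff_of_false hy₀B hb))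
  have classEq : ∀ C ∈ μ.classes,
      C = { x | μ x xA } ∨ C = { x | μ x yA } := by
    rintro C ⟨b, rfl⟩
    rcases key b with h | h
    · left
      ext z
      exact ⟨fun hz => μ.trans' hz (μ.symm' h), fun hz => μ.trans' hz h⟩
    · right
      ext z
      exact ⟨fun hz => μ.trans' hz (μ.symm' h), fun hz => μ.trans' hz h⟩
  obtain ⟨B₁, hB₁, B₂, hB₂, B₃, hB₃, h12, h13, h23⟩ := h3
  rcases classEq B₁ hB₁ with e1 | e1 <;> rcases classEq B₂ hB₂ with e2 | e2 <;>
    rcases classEq B₃ hB₃ with e3 | e3 <;>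
    first
      | exact h12 (e1.trans e2.symm)
      | exact h13 (e1.trans e3.symm)
      | exact h23 (e2.trans e3.symm)
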